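/- (Density Theorem for Zeckendorf Decompositions) Let S be a subset of the Fibonacci numbers with asymptotic density q(S). For m chosen uniformly at random from the integers in [0, F_{n+1}), let X_n(m) be the number of Zeckendorf summands of m and Y_n(m) the number of those summands lying in S. Then for every ε > 0, Prob(|Y_n(m)/X_n(m) - q(S)| < ε) → 1 as n → ∞. -/

import Mathlib

def Fib (n : ℕ) : ℕ := Nat.fib (n + 1)

open Finset

namespace ZeckAux

/-! ### Fibonacci facts -/

lemma fib_lower (a b : ℕ) : Nat.fib (a+1) * Nat.fib (b+1) ≤ Nat.fib (a+b+1) := by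
  rw [Nat.fib_add]; exact Nat.le_add_left _ _

lemma fib_upper (a b : ℕ) : Nat.fib (a+b+1) ≤ 2 * (Nat.fib (a+1) * Nat.fib (b+1)) := by
  rw [Nat.fib_add, two_mul]
  exact Nat.add_le_add_right (Nat.mul_le_mul (Nat.fib_mono (Nat.le_succ a)) (Nat.fib_mono (Nat.le_succ b))) _

lemma fib_two_step (m : ℕ) : 2 * Nat.fib m ≤ Nat.fib (m + 2) := by
  rw [Nat.fib_add_two]
  have h := Nat.fib_mono (Nat.le_succ m)
  rw [Nat.succ_eq_add_one] at h
  omega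

lemma fib_pow_le (k m : ℕ) : 2 ^ k * Nat.fib m ≤ Nat.fib (m + 2 * k) := by
  induction k with
  | zero => simp
  | succ k ih =>
      calc 2 ^ (k+1) * Nat.fib m = 2 * (2 ^ k * Nat.fib m) := by ring
        _ ≤ 2 * Nat.fib (m + 2 * k) := Nat.mul_le_mul_left _ ih
        _ ≤ Nat.fib (m + 2 * k + 2) := fib_two_step _
        _ = Nat.fib (m + 2 * (k + 1)) := by rw [show m + 2*k + 2 = m + 2*(k+1) from by ring]

lemma fibD (x : ℕ) : ∀ y : ℕ, x ≤ y →
    (Nat.fib x * Nat.fib (y+1) : ℤ) - Nat.fib (x+1) * Nat.fib y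
      = (-1)^(x+1) * Nat.fib (y - x) := by
  induction x with
  | zero => intro y _; simp
  | succ x ih =>
      intro y hxy
      obtain ⟨y, rfl⟩ : ∃ y', y = y' + 1 := ⟨y - 1, by omega⟩
      have h1 : (Nat.fib (y+2) : ℤ) = Nat.fib y + Nat.fib (y+1) := by
        rw [Nat.fib_add_two]; push_cast; ring
      have h2 : (Nat.fib (x+2) : ℤ) = Nat.fib x + Nat.fib (x+1) := by
        rw [Nat.fib_add_two]; push_cast; ring
      have hxy' : x ≤ y := by omega
      have this := ih y hxy'
      have hsub : y + 1 - (x + 1) = y - x := by omega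
      rw [hsub, h1, h2]
      linear_combination -this

/-! ### Non-adjacent subsets of an interval -/

def VB (a b : ℕ) : Finset (Finset ℕ) :=
  (Finset.Icc a b).powerset.filter (fun A => ∀ x ∈ A, ∀ y ∈ A, x < y → x + 1 < y)

lemma mem_VB {a b : ℕ} {A : Finset ℕ} :
    A ∈ VB a b ↔ A ⊆ Finset.Icc a b ∧ ∀ x ∈ A, ∀ y ∈ A, x < y → x + 1 < y := by
  simp [VB]

lemma VB_empty {a b : ℕ} (h : b < a) : VB a b = {∅} := by
  ext A
  simp only [mem_VB, Finset.mem_singleton]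
  constructor
  · rintro ⟨hsub, -⟩
    rw [Finset.Icc_eq_empty (by omega), Finset.subset_empty] at hsub
    exact hsub
  · rintro rfl
    simp

lemma splitCard (a b i : ℕ) (ha : 1 ≤ a) (hai : a ≤ i) (hib : i ≤ b)
    (P : Finset ℕ → Prop) [DecidablePred P] :
    ((VB a b).filter (fun A => i ∈ A ∧ P (A.filter (· < i)))).card
      = ((VB a (i - 2)).filter P).card * (VB (i + 2) b).card := by
  classical
  rw [← Finset.card_product]
  refine Finset.card_bij'
    (fun A _ => (A.filter (· < i), A.filter (fun x => i < x)))
    (fun p _ => insert i (p.1 ∪ p.2)) ?_ ?_ ?_ ?_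
  · -- forward maps into product
    intro A hA
    rw [Finset.mem_filter] at hA
    obtain ⟨hAV, hiA, hP⟩ := hA
    rw [mem_VB] at hAV
    obtain ⟨hsub, hnadj⟩ := hAV
    rw [Finset.mem_product]
    constructor
    · rw [Finset.mem_filter, mem_VB]
      refine ⟨⟨?_, ?_⟩, hP⟩
      · intro x hx
        rw [Finset.mem_filter] at hx
        obtain ⟨hxA, hxi⟩ := hx
        have h1 := (Finset.mem_Icc.mp (hsub hxA)).1
        have h2 := hnadj x hxA i hiA hxi
        rw [Finset.mem_Icc]; omega
      · intro x hx y hy hxy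
        rw [Finset.mem_filter] at hx hy
        exact hnadj x hx.1 y hy.1 hxy
    · rw [mem_VB]
      constructor
      · intro x hx
        rw [Finset.mem_filter] at hx
        obtain ⟨hxA, hxi⟩ := hx
        have h1 := (Finset.mem_Icc.mp (hsub hxA)).2
        have h2 := hnadj i hiA x hxA hxi
        rw [Finset.mem_Icc]; omega
      · intro x hx y hy hxy
        rw [Finset.mem_filter] at hx hy
        exact hnadj x hx.1 y hy.1 hxy
  · -- backward maps into filtered VB
    rintro ⟨B, C⟩ hp
    rw [Finset.mem_product, Finset.mem_filter, mem_VB] at hp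
    obtain ⟨⟨⟨hBsub, hBadj⟩, hPB⟩, hC⟩ := hp
    rw [mem_VB] at hC
    obtain ⟨hCsub, hCadj⟩ := hC
    have hBmem : ∀ x ∈ B, a ≤ x ∧ x ≤ i - 2 := fun x hx => Finset.mem_Icc.mp (hBsub hx)
    have hCmem : ∀ x ∈ C, i + 2 ≤ x ∧ x ≤ b := fun x hx => Finset.mem_Icc.mp (hCsub hx)
    have hfilt : (insert i (B ∪ C)).filter (· < i) = B := by
      ext z
      simp only [Finset.mem_filter, Finset.mem_insert, Finset.mem_union]
      constructor
      · rintro ⟨rfl | hz | hz, hlt⟩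
        · omega
        · exact hz
        · exact absurd hlt (by have := hCmem z hz; omega)
      · intro hz
        have := hBmem z hz
        exact ⟨Or.inr (Or.inl hz), by omega⟩
    rw [Finset.mem_filter, mem_VB]
    refine ⟨⟨?_, ?_⟩, Finset.mem_insert_self _ _, by rwa [hfilt]⟩
    · intro x hx
      rw [Finset.mem_insert, Finset.mem_union] at hx
      rw [Finset.mem_Icc]
      rcases hx with rfl | hx | hx
      · omega
      · have := hBmem x hx; omega
      · have := hCmem x hx; omega
    · intro x hx y hy hxy
      rw [Finset.mem_insert, Finset.mem_union] at hx hy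
      rcases hx with rfl | hx | hx <;> rcases hy with rfl | hy | hy
      · omega
      · have := hBmem y hy; omega
      · have := hCmem y hy; omega
      · have := hBmem x hx; omega
      · exact hBadj x hx y hy hxy
      · have := hBmem x hx; have := hCmem y hy; omega
      · have := hCmem x hx; omega
      · have := hCmem x hx; have := hBmem y hy; omega
      · exact hCadj x hx y hy hxy
  · -- left inverse
    intro A hA
    rw [Finset.mem_filter] at hA
    obtain ⟨hAV, hiA, -⟩ := hA
    ext z
    simp only [Finset.mem_insert, Finset.mem_union, Finset.mem_filter]
    constructor
    · rintro (rfl | ⟨hz, -⟩ | ⟨hz, -⟩) <;> first | exact hiA | exact hz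
    · intro hz
      rcases lt_trichotomy z i with h | rfl | h
      · exact Or.inr (Or.inl ⟨hz, h⟩)
      · exact Or.inl rfl
      · exact Or.inr (Or.inr ⟨hz, h⟩)
  · -- right inverse
    rintro ⟨B, C⟩ hp
    rw [Finset.mem_product, Finset.mem_filter, mem_VB] at hp
    obtain ⟨⟨⟨hBsub, hBadj⟩, hPB⟩, hC⟩ := hp
    rw [mem_VB] at hC
    obtain ⟨hCsub, hCadj⟩ := hC
    have hBmem : ∀ x ∈ B, a ≤ x ∧ x ≤ i - 2 := fun x hx => Finset.mem_Icc.mp (hBsub hx)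
    have hCmem : ∀ x ∈ C, i + 2 ≤ x ∧ x ≤ b := fun x hx => Finset.mem_Icc.mp (hCsub hx)
    have h1 : (insert i (B ∪ C)).filter (· < i) = B := by
      ext z
      simp only [Finset.mem_filter, Finset.mem_insert, Finset.mem_union]
      constructor
      · rintro ⟨rfl | hz | hz, hlt⟩
        · omega
        · exact hz
        · exact absurd hlt (by have := hCmem z hz; omega)
      · intro hz
        have := hBmem z hz
        exact ⟨Or.inr (Or.inl hz), by omega⟩
    have h2 : (insert i (B ∪ C)).filter (fun x => i < x) = C := by
      ext z
      simp only [Finset.mem_filter, Finset.mem_insert, Finset.mem_union]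
      constructor
      · rintro ⟨rfl | hz | hz, hlt⟩
        · omega
        · exact absurd hlt (by have := hBmem z hz; omega)
        · exact hz
      · intro hz
        have := hCmem z hz
        exact ⟨Or.inr (Or.inr hz), by omega⟩
    simp only [h1, h2]

lemma VB_self (a : ℕ) : VB a a = {∅, {a}} := by
  ext A
  simp only [mem_VB, Finset.Icc_self, Finset.mem_insert, Finset.mem_singleton]
  constructor
  · rintro ⟨hsub, -⟩
    exact Finset.subset_singleton_iff.mp hsub
  · rintro (rfl | rfl)
    · simp
    · refine ⟨Finset.Subset.refl _, ?_⟩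
      intro x hx y hy hxy
      rw [Finset.mem_singleton] at hx hy
      omega

lemma VB_card : ∀ b a : ℕ, 1 ≤ a → a ≤ b + 2 → (VB a b).card = Nat.fib (b + 3 - a) := by
  intro b
  induction b using Nat.strong_induction_on with
  | _ b IH =>
    intro a ha hab
    rcases lt_or_ge b a with hba | hab'
    · rw [VB_empty hba]
      have : b + 3 - a = 1 ∨ b + 3 - a = 2 := by omega
      rcases this with h | h <;> rw [h] <;> simp
    · rcases eq_or_lt_of_le hab' with rfl | hlt
      · rw [VB_self]
        have h1 : a + 3 - a = 3 := by omega
        rw [h1]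
        rw [Finset.card_insert_of_notMem (by simp only [Finset.mem_singleton]; exact (Finset.singleton_ne_empty a).symm), Finset.card_singleton]
        rfl
      · -- a < b
        classical
        have hsplit := splitCard a b b ha (le_of_lt hlt) (le_refl b) (fun _ => True)
        simp only [and_true, Finset.filter_true_of_mem (fun _ _ => trivial)] at hsplit
        have hVB2 : (VB (b+2) b).card = 1 := by rw [VB_empty (by omega)]; simp
        have hnot : (VB a b).filter (fun A => b ∉ A) = VB a (b-1) := by
          ext A
          simp only [Finset.mem_filter, mem_VB]
          constructor
          · rintro ⟨⟨hsub, hadj⟩, hbA⟩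
            refine ⟨fun x hx => ?_, hadj⟩
            have h := Finset.mem_Icc.mp (hsub hx)
            have hne : x ≠ b := fun hxb => hbA (hxb ▸ hx)
            rw [Finset.mem_Icc]; omega
          · rintro ⟨hsub, hadj⟩
            refine ⟨⟨fun x hx => ?_, hadj⟩, fun hbA => ?_⟩
            · have h := Finset.mem_Icc.mp (hsub hx); rw [Finset.mem_Icc]; omega
            · have := (Finset.mem_Icc.mp (hsub hbA)).2; omega
        have hcards := Finset.card_filter_add_card_filter_not
          (s := VB a b) (fun A => b ∈ A)
        have hc1 : ((VB a b).filter (fun A => b ∈ A)).card = Nat.fib (b + 1 - a) := by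
          rw [hsplit, hVB2, mul_one, IH (b-2) (by omega) a ha (by omega)]
          congr 1; omega
        have hc2 : ((VB a b).filter (fun A => b ∉ A)).card = Nat.fib (b + 2 - a) := by
          rw [hnot, IH (b-1) (by omega) a ha (by omega)]
          congr 1; omega
        have hfib : Nat.fib (b + 3 - a) = Nat.fib (b + 1 - a) + Nat.fib (b + 2 - a) := by
          have e : b + 3 - a = (b + 1 - a) + 2 := by omega
          have e2 : b + 2 - a = (b + 1 - a) + 1 := by omega
          rw [e, e2, Nat.fib_add_two]
        omega

lemma Fib_mono : Monotone Fib := fun a b h => Nat.fib_mono (by omega)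

lemma Fib_pos (n : ℕ) : 1 ≤ Fib n := Nat.fib_pos.mpr (Nat.succ_pos n)

lemma count_single (n i : ℕ) (h1 : 1 ≤ i) (h2 : i ≤ n) :
    ((VB 1 n).filter (fun A => i ∈ A)).card = Nat.fib i * Nat.fib (n + 1 - i) := by
  classical
  have h := splitCard 1 n i le_rfl h1 h2 (fun _ => True)
  simp only [and_true, Finset.filter_true] at h
  rw [h, VB_card (i-2) 1 le_rfl (by omega), VB_card n (i+2) (by omega) (by omega)]
  have e2 : n + 3 - (i + 2) = n + 1 - i := by omega
  rw [e2]
  have e1 : Nat.fib (i - 2 + 3 - 1) = Nat.fib i := by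
    rcases Nat.lt_or_ge i 2 with h' | h'
    · interval_cases i <;> rfl
    · congr 1; omega
  rw [e1]

lemma count_adj (n i : ℕ) :
    ((VB 1 n).filter (fun A => i ∈ A ∧ i + 1 ∈ A)) = ∅ := by
  rw [Finset.filter_eq_empty_iff]
  rintro A hA ⟨h1, h2⟩
  rw [mem_VB] at hA
  exact absurd (hA.2 i h1 (i+1) h2 (by omega)) (by omega)

lemma count_pair (n i j : ℕ) (h1 : 1 ≤ i) (hij : i + 1 < j) (hj : j ≤ n) :
    ((VB 1 n).filter (fun A => i ∈ A ∧ j ∈ A)).card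
      = Nat.fib i * Nat.fib (j - i - 1) * Nat.fib (n + 1 - j) := by
  classical
  have h := splitCard 1 n j le_rfl (by omega) hj (fun B => i ∈ B)
  have hcong : (VB 1 n).filter (fun A => j ∈ A ∧ i ∈ A.filter (· < j))
      = (VB 1 n).filter (fun A => i ∈ A ∧ j ∈ A) := by
    apply Finset.filter_congr
    intro A hA
    simp only [Finset.mem_filter]
    constructor
    · rintro ⟨hjA, hiA, -⟩; exact ⟨hiA, hjA⟩
    · rintro ⟨hiA, hjA⟩; exact ⟨hjA, hiA, by omega⟩
  rw [hcong] at h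
  rw [h, count_single (j-2) i h1 (by omega), VB_card n (j+2) (by omega) (by omega)]
  have e1 : j - 2 + 1 - i = j - i - 1 := by omega
  have e2 : n + 3 - (j + 2) = n + 1 - j := by omega
  rw [e1, e2]

/-! ### Zeckendorf -/

lemma fib_sum_lt : ∀ M : ℕ, ∀ A : Finset ℕ, A ∈ VB 1 M → ∑ i ∈ A, Fib i < Fib (M + 1) := by
  intro M
  induction M using Nat.strong_induction_on with
  | _ M IH =>
    intro A hA
    rw [mem_VB] at hA
    obtain ⟨hsub, hadj⟩ := hA
    rcases Nat.eq_zero_or_pos M with rfl | hM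
    · have hAe : A = ∅ := by
        rw [← Finset.subset_empty]
        intro x hx
        have := Finset.mem_Icc.mp (hsub hx)
        omega
      subst hAe
      simp [Fib]
    · by_cases hMA : M ∈ A
      · have hsub' : A.erase M ⊆ Finset.Icc 1 (M - 2) := by
          intro x hx
          obtain ⟨hxne, hxA⟩ := Finset.mem_erase.mp hx
          have h := Finset.mem_Icc.mp (hsub hxA)
          have hlt : x < M := by omega
          have := hadj x hxA M hMA hlt
          rw [Finset.mem_Icc]; omega
        have hA' : A.erase M ∈ VB 1 (M-2) := mem_VB.mpr ⟨hsub',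
          fun x hx y hy hxy => hadj x (Finset.mem_of_mem_erase hx) y (Finset.mem_of_mem_erase hy) hxy⟩
        have hrest := IH (M-2) (by omega) _ hA'
        have hsum : ∑ i ∈ A, Fib i = Fib M + ∑ i ∈ A.erase M, Fib i :=
          (Finset.add_sum_erase _ _ hMA).symm
        have hFe : Fib (M-2+1) ≤ Fib (M-1) := by
          rcases Nat.lt_or_ge M 2 with h' | h'
          · interval_cases M
            decide
          · exact Fib_mono (by omega)
        have hf : Fib M + Fib (M-1) ≤ Fib (M+1) := by
          have e : M - 1 + 1 = M := by omega
          simp only [Fib, e]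
          rw [show M + 1 + 1 = M + 2 from rfl, Nat.fib_add_two]
          omega
        omega
      · have hA' : A ∈ VB 1 (M-1) := by
          rw [mem_VB]
          refine ⟨fun x hx => ?_, hadj⟩
          have h := Finset.mem_Icc.mp (hsub hx)
          have : x ≠ M := fun he => hMA (he ▸ hx)
          rw [Finset.mem_Icc]; omega
        have := IH (M-1) (by omega) _ hA'
        have : Fib (M-1+1) ≤ Fib (M+1) := Fib_mono (by omega)
        omega

lemma zeck_unique : ∀ s : ℕ, ∀ A B : Finset ℕ,
    (∀ i ∈ A, 1 ≤ i) → (∀ x ∈ A, ∀ y ∈ A, x < y → x + 1 < y) →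
    (∀ i ∈ B, 1 ≤ i) → (∀ x ∈ B, ∀ y ∈ B, x < y → x + 1 < y) →
    (∑ i ∈ A, Fib i = s) → (∑ i ∈ B, Fib i = s) → A = B := by
  intro s
  induction s using Nat.strong_induction_on with
  | _ s IH =>
    intro A B hA1 hA2 hB1 hB2 hAs hBs
    rcases Nat.eq_zero_or_pos s with rfl | hs
    · have hA : A = ∅ := by
        by_contra h
        obtain ⟨x, hx⟩ := Finset.nonempty_iff_ne_empty.mpr h
        have h1 : Fib x ≤ ∑ i ∈ A, Fib i := Finset.single_le_sum (fun i _ => Nat.zero_le _) hx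
        have h2 := Fib_pos x
        omega
      have hB : B = ∅ := by
        by_contra h
        obtain ⟨x, hx⟩ := Finset.nonempty_iff_ne_empty.mpr h
        have h1 : Fib x ≤ ∑ i ∈ B, Fib i := Finset.single_le_sum (fun i _ => Nat.zero_le _) hx
        have h2 := Fib_pos x
        omega
      rw [hA, hB]
    · have hAne : A.Nonempty := by
        by_contra h
        rw [Finset.not_nonempty_iff_eq_empty] at h
        subst h; simp at hAs; omega
      have hBne : B.Nonempty := by
        by_contra h
        rw [Finset.not_nonempty_iff_eq_empty] at h
        subst h; simp at hBs; omega
      set MA := A.max' hAne with hMA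
      set MB := B.max' hBne with hMB
      have hMAA : MA ∈ A := A.max'_mem hAne
      have hMBB : MB ∈ B := B.max'_mem hBne
      have hAVB : A ∈ VB 1 MA := mem_VB.mpr ⟨fun x hx => Finset.mem_Icc.mpr
        ⟨hA1 x hx, A.le_max' x hx⟩, hA2⟩
      have hBVB : B ∈ VB 1 MB := mem_VB.mpr ⟨fun x hx => Finset.mem_Icc.mpr
        ⟨hB1 x hx, B.le_max' x hx⟩, hB2⟩
      have hAup := fib_sum_lt MA A hAVB
      have hBup := fib_sum_lt MB B hBVB
      have hAlo : Fib MA ≤ s := hAs ▸ Finset.single_le_sum (fun i _ => Nat.zero_le _) hMAA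
      have hBlo : Fib MB ≤ s := hBs ▸ Finset.single_le_sum (fun i _ => Nat.zero_le _) hMBB
      rw [hAs] at hAup
      rw [hBs] at hBup
      have hMeq : MA = MB := by
        by_contra hne
        rcases Nat.lt_or_ge MA MB with h | h
        · have := Fib_mono (show MA + 1 ≤ MB by omega)
          omega
        · have hlt : MB < MA := by omega
          have := Fib_mono (show MB + 1 ≤ MA by omega)
          omega
      have hsumA : ∑ i ∈ A.erase MA, Fib i = s - Fib MA := by
        have := (Finset.add_sum_erase _ Fib hMAA).symm
        omega
      have hMAB : MA ∈ B := by rw [hMeq]; exact hMBB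
      have hsumB : ∑ i ∈ B.erase MA, Fib i = s - Fib MA := by
        have h := (Finset.add_sum_erase _ Fib hMAB).symm
        omega
      have hFibpos := Fib_pos MA
      have herase : A.erase MA = B.erase MA := by
        apply IH (s - Fib MA) (by omega)
        · exact fun i hi => hA1 i (Finset.mem_of_mem_erase hi)
        · exact fun x hx y hy hxy => hA2 x (Finset.mem_of_mem_erase hx) y (Finset.mem_of_mem_erase hy) hxy
        · exact fun i hi => hB1 i (Finset.mem_of_mem_erase hi)
        · exact fun x hx y hy hxy => hB2 x (Finset.mem_of_mem_erase hx) y (Finset.mem_of_mem_erase hy) hxy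
        · exact hsumA
        · exact hsumB
      have : insert MA (A.erase MA) = insert MA (B.erase MA) := by rw [herase]
      rwa [Finset.insert_erase hMAA, Finset.insert_erase hMAB] at this

lemma ZD_card_eq (ZD : ℕ → Finset ℕ)
    (hZD : ∀ m : ℕ, (∀ i ∈ ZD m, 1 ≤ i) ∧
      (∀ i ∈ ZD m, ∀ j ∈ ZD m, i < j → i + 1 < j) ∧ m = ∑ i ∈ ZD m, Fib i)
    (n : ℕ) (Q : Finset ℕ → Prop) [DecidablePred Q] :
    ((Finset.range (Fib (n+1))).filter (fun m => Q (ZD m))).card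
      = ((VB 1 n).filter Q).card := by
  classical
  apply Finset.card_bij (fun m _ => ZD m)
  · intro m hm
    rw [Finset.mem_filter, Finset.mem_range] at hm
    obtain ⟨hmlt, hQ⟩ := hm
    rw [Finset.mem_filter]
    refine ⟨mem_VB.mpr ⟨?_, (hZD m).2.1⟩, hQ⟩
    intro i hi
    rw [Finset.mem_Icc]
    refine ⟨(hZD m).1 i hi, ?_⟩
    by_contra h
    push_neg at h
    have h1 : Fib i ≤ m := by
      have h := Finset.single_le_sum (f := Fib) (fun i _ => Nat.zero_le _) hi
      rw [(hZD m).2.2]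
      exact h
    have h2 : Fib (n+1) ≤ Fib i := Fib_mono (by omega)
    omega
  · intro m1 h1 m2 h2 heq
    rw [(hZD m1).2.2, (hZD m2).2.2, heq]
  · intro A hA
    rw [Finset.mem_filter, mem_VB] at hA
    obtain ⟨⟨hsub, hadj⟩, hQ⟩ := hA
    have hZDA : ZD (∑ i ∈ A, Fib i) = A :=
      zeck_unique _ _ _ (hZD _).1 (hZD _).2.1
        (fun i hi => (Finset.mem_Icc.mp (hsub hi)).1) hadj ((hZD _).2.2).symm rfl
    refine ⟨∑ i ∈ A, Fib i, ?_, hZDA⟩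
    rw [Finset.mem_filter, Finset.mem_range, hZDA]
    exact ⟨fib_sum_lt n A (mem_VB.mpr ⟨hsub, hadj⟩), hQ⟩

/-! ### Generic probabilistic lemmas -/

lemma var_est {α : Type*} (V : Finset α) (f : α → ℝ) (C : ℝ)
    (hNe : 0 < (V.card : ℝ))
    (hbound : (V.card : ℝ) * (∑ a ∈ V, (f a)^2) - (∑ a ∈ V, f a)^2 ≤ C * (V.card : ℝ)^2) :
    ∑ a ∈ V, (f a - (∑ b ∈ V, f b)/(V.card : ℝ))^2 ≤ C * V.card := by
  have hexp : ∑ a ∈ V, (f a - (∑ b ∈ V, f b)/(V.card : ℝ))^2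
      = ((V.card : ℝ) * (∑ a ∈ V, (f a)^2) - (∑ a ∈ V, f a)^2)/(V.card : ℝ) := by
    have h1 : ∀ a ∈ V, (f a - (∑ b ∈ V, f b)/(V.card : ℝ))^2
        = (f a)^2 - 2*((∑ b ∈ V, f b)/(V.card : ℝ))*(f a) + ((∑ b ∈ V, f b)/(V.card : ℝ))^2 :=
      fun a _ => by ring
    rw [Finset.sum_congr rfl h1, Finset.sum_add_distrib, Finset.sum_sub_distrib,
      ← Finset.mul_sum, Finset.sum_const, nsmul_eq_mul]
    field_simp
    ring
  rw [hexp]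
  rw [div_le_iff₀ hNe]
  calc (V.card : ℝ) * (∑ a ∈ V, (f a)^2) - (∑ a ∈ V, f a)^2 ≤ C * (V.card : ℝ)^2 := hbound
    _ = C * (V.card : ℝ) * (V.card : ℝ) := by ring

lemma cheb {α : Type*} (V : Finset α) (f : α → ℝ) (μ t : ℝ) (ht : 0 < t)
    (p : α → Prop) [DecidablePred p] (hp : ∀ a, p a → t ≤ |f a - μ|) :
    t^2 * ((V.filter p).card : ℝ) ≤ ∑ a ∈ V, (f a - μ)^2 := by
  have h1 : t^2 * ((V.filter p).card : ℝ) = ∑ a ∈ V.filter p, t^2 := by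
    rw [Finset.sum_const, nsmul_eq_mul]; ring
  rw [h1]
  calc ∑ a ∈ V.filter p, t^2 ≤ ∑ a ∈ V.filter p, (f a - μ)^2 := by
        apply Finset.sum_le_sum
        intro a ha
        have hpa := hp a (Finset.mem_filter.mp ha).2
        have h2 : |t| ≤ |f a - μ| := by rw [abs_of_pos ht]; exact hpa
        calc t^2 = |t|^2 := (sq_abs t).symm
          _ ≤ |f a - μ|^2 := by nlinarith [abs_nonneg t, abs_nonneg (f a - μ)]
          _ = (f a - μ)^2 := sq_abs _
    _ ≤ ∑ a ∈ V, (f a - μ)^2 :=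
        Finset.sum_le_sum_of_subset_of_nonneg (Finset.filter_subset _ _)
          (fun a _ _ => sq_nonneg _)

lemma moment1 (n : ℕ) (w : ℕ → ℝ) :
    ∑ A ∈ VB 1 n, (∑ i ∈ Finset.Icc 1 n, if i ∈ A then w i else 0)
      = ∑ i ∈ Finset.Icc 1 n, w i * ((Nat.fib i * Nat.fib (n + 1 - i) : ℕ) : ℝ) := by
  classical
  rw [Finset.sum_comm]
  apply Finset.sum_congr rfl
  intro i hi
  rw [Finset.mem_Icc] at hi
  rw [← Finset.sum_filter, Finset.sum_const, count_single n i hi.1 hi.2, nsmul_eq_mul]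
  push_cast
  ring

lemma moment2 (n : ℕ) (w : ℕ → ℝ) :
    ∑ A ∈ VB 1 n, (∑ i ∈ Finset.Icc 1 n, if i ∈ A then w i else 0)^2
      = ∑ i ∈ Finset.Icc 1 n, ∑ j ∈ Finset.Icc 1 n,
          w i * w j * (((VB 1 n).filter (fun A => i ∈ A ∧ j ∈ A)).card : ℝ) := by
  classical
  have hsq : ∀ A : Finset ℕ, (∑ i ∈ Finset.Icc 1 n, if i ∈ A then w i else 0)^2
      = ∑ i ∈ Finset.Icc 1 n, ∑ j ∈ Finset.Icc 1 n,
          if i ∈ A ∧ j ∈ A then w i * w j else 0 := by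
    intro A
    rw [sq, Finset.sum_mul_sum]
    apply Finset.sum_congr rfl
    intro i _
    apply Finset.sum_congr rfl
    intro j _
    by_cases h1 : i ∈ A <;> by_cases h2 : j ∈ A <;> simp [h1, h2]
  rw [Finset.sum_congr rfl (fun A _ => hsq A), Finset.sum_comm]
  apply Finset.sum_congr rfl
  intro i _
  rw [Finset.sum_comm]
  apply Finset.sum_congr rfl
  intro j _
  rw [← Finset.sum_filter, Finset.sum_const, nsmul_eq_mul]
  ring

/-! ### Covariance bounds -/

lemma card_VB1 (n : ℕ) : (VB 1 n).card = Nat.fib (n+2) := by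
  have h := VB_card n 1 le_rfl (by omega)
  rwa [show n+3-1 = n+2 by omega] at h

lemma c_le (n i : ℕ) (h1 : 1 ≤ i) (h2 : i ≤ n) :
    Nat.fib i * Nat.fib (n + 1 - i) ≤ Nat.fib (n + 2) := by
  classical
  rw [← count_single n i h1 h2, ← card_VB1 n]
  exact Finset.card_filter_le _ _

lemma c_lower (n i : ℕ) (h1 : 1 ≤ i) (h2 : i ≤ n) :
    Nat.fib (n + 2) ≤ 10 * (Nat.fib i * Nat.fib (n + 1 - i)) := by
  obtain ⟨a, rfl⟩ : ∃ a, i = a + 1 := ⟨i - 1, by omega⟩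
  obtain ⟨e, rfl⟩ : ∃ e, n = a + 1 + e := ⟨n - (a+1), by omega⟩
  have h4 : Nat.fib (e+2) ≤ 2 * Nat.fib (e+1) := by
    rw [Nat.fib_add_two]
    have h := Nat.fib_mono (Nat.le_succ e)
    rw [Nat.succ_eq_add_one] at h
    omega
  have h5 : Nat.fib (e+3) ≤ 3 * Nat.fib (e+1) := by
    rw [show e+3 = (e+1)+2 from by ring, Nat.fib_add_two, show e+1+1 = e+2 from rfl]
    omega
  rw [show a+1+e+2 = a+(e+2)+1 from by ring, show a+1+e+1-(a+1) = e+1 from by omega]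
  calc Nat.fib (a+(e+2)+1) ≤ 2*(Nat.fib (a+1) * Nat.fib (e+3)) := fib_upper a (e+2)
    _ ≤ 2*(Nat.fib (a+1) * (3 * Nat.fib (e+1))) :=
        Nat.mul_le_mul_left _ (Nat.mul_le_mul_left _ h5)
    _ ≤ 10 * (Nat.fib (a+1) * Nat.fib (e+1)) := by nlinarith [Nat.zero_le (Nat.fib (a+1) * Nat.fib (e+1))]

lemma T_core (a d e : ℕ) :
    (Nat.fib (a+d+e+5) : ℤ) * (Nat.fib (a+1) * Nat.fib (d+1) * Nat.fib (e+1))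
      - (Nat.fib (a+1) * Nat.fib (d+e+3) : ℤ) * (Nat.fib (a+d+3) * Nat.fib (e+1))
    = (Nat.fib (a+1) : ℤ) * Nat.fib (e+1) * Nat.fib (a+2) * ((-1)^d * Nat.fib (e+2)) := by
  have h1 : (Nat.fib (a+d+e+5) : ℤ)
      = Nat.fib (d+e+2) * Nat.fib (a+2) + Nat.fib (d+e+3) * Nat.fib (a+3) := by
    rw [show a+d+e+5 = (d+e+2)+(a+2)+1 from by ring, Nat.fib_add]
    push_cast; ring
  have h2 : (Nat.fib (a+d+3) : ℤ)
      = Nat.fib d * Nat.fib (a+2) + Nat.fib (d+1) * Nat.fib (a+3) := by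
    rw [show a+d+3 = d+(a+2)+1 from by ring, Nat.fib_add]
    push_cast; ring
  have h3 := fibD d (d+e+2) (by omega)
  rw [show d+e+2-d = e+2 from by omega] at h3
  rw [h1, h2]
  linear_combination (-(Nat.fib (a+1) : ℤ) * Nat.fib (e+1) * Nat.fib (a+2)) * h3

lemma T_bound_core (a d e : ℕ) :
    2^(d+2) * |(Nat.fib (a+d+e+5) : ℤ) * (Nat.fib (a+1) * Nat.fib (d+1) * Nat.fib (e+1))
      - (Nat.fib (a+1) * Nat.fib (d+e+3) : ℤ) * (Nat.fib (a+d+3) * Nat.fib (e+1))|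
      ≤ 4 * (Nat.fib (a+d+e+5) : ℤ)^2 := by
  rw [T_core]
  have habs : |(Nat.fib (a+1) : ℤ) * Nat.fib (e+1) * Nat.fib (a+2) * ((-1)^d * Nat.fib (e+2))|
      = (Nat.fib (a+1) * Nat.fib (e+1) * Nat.fib (a+2) * Nat.fib (e+2) : ℕ) := by
    rw [abs_mul, abs_mul, abs_mul, abs_mul, abs_pow, abs_neg, abs_one, one_pow, one_mul]
    push_cast
    simp [abs_of_nonneg, Nat.cast_nonneg]
  -- natural number chain
  have s1 : Nat.fib (a+1) * Nat.fib (a+2) ≤ Nat.fib (2*a+2) := by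
    have := fib_lower a (a+1)
    rwa [show a+(a+1)+1 = 2*a+2 from by ring] at this
  have s2 : Nat.fib (e+1) * Nat.fib (e+2) ≤ Nat.fib (2*e+2) := by
    have := fib_lower e (e+1)
    rwa [show e+(e+1)+1 = 2*e+2 from by ring] at this
  have s3 : Nat.fib (2*a+2) * Nat.fib (2*e+2) ≤ Nat.fib (2*a+2*e+3) := by
    have := fib_lower (2*a+1) (2*e+1)
    rwa [show (2*a+1)+(2*e+1)+1 = 2*a+2*e+3 from by ring] at this
  have s4 : 2^(d+3) * Nat.fib (2*a+2*e+3) ≤ Nat.fib (2*a+2*d+2*e+9) := by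
    have := fib_pow_le (d+3) (2*a+2*e+3)
    rwa [show 2*a+2*e+3+2*(d+3) = 2*a+2*d+2*e+9 from by ring] at this
  have s5 : Nat.fib (2*a+2*d+2*e+9) ≤ 2 * (Nat.fib (a+d+e+5) * Nat.fib (a+d+e+5)) := by
    have := fib_upper (a+d+e+4) (a+d+e+4)
    rwa [show (a+d+e+4)+(a+d+e+4)+1 = 2*a+2*d+2*e+9 from by ring] at this
  have hK : Nat.fib (a+1) * Nat.fib (e+1) * Nat.fib (a+2) * Nat.fib (e+2)
      ≤ Nat.fib (2*a+2*e+3) := by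
    calc Nat.fib (a+1) * Nat.fib (e+1) * Nat.fib (a+2) * Nat.fib (e+2)
        = (Nat.fib (a+1) * Nat.fib (a+2)) * (Nat.fib (e+1) * Nat.fib (e+2)) := by ring
      _ ≤ Nat.fib (2*a+2) * Nat.fib (2*e+2) := Nat.mul_le_mul s1 s2
      _ ≤ Nat.fib (2*a+2*e+3) := s3
  have hmain : 2^(d+3) * (Nat.fib (a+1) * Nat.fib (e+1) * Nat.fib (a+2) * Nat.fib (e+2))
      ≤ 2 * (Nat.fib (a+d+e+5) * Nat.fib (a+d+e+5)) :=
    le_trans (le_trans (Nat.mul_le_mul_left _ hK) s4) s5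
  have hnat : 2^(d+2) * (Nat.fib (a+1) * Nat.fib (e+1) * Nat.fib (a+2) * Nat.fib (e+2))
      ≤ Nat.fib (a+d+e+5) * Nat.fib (a+d+e+5) := by
    have h2 : 2^(d+3) * (Nat.fib (a+1) * Nat.fib (e+1) * Nat.fib (a+2) * Nat.fib (e+2))
        = 2 * (2^(d+2) * (Nat.fib (a+1) * Nat.fib (e+1) * Nat.fib (a+2) * Nat.fib (e+2))) := by ring
    rw [h2] at hmain
    exact Nat.le_of_mul_le_mul_left hmain (by norm_num)
  have hZ : (2:ℤ)^(d+2) * ((Nat.fib (a+1) * Nat.fib (e+1) * Nat.fib (a+2) * Nat.fib (e+2) : ℕ) : ℤ)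
      ≤ ((Nat.fib (a+d+e+5) * Nat.fib (a+d+e+5) : ℕ) : ℤ) := by exact_mod_cast hnat
  push_cast at hZ
  rw [habs]
  push_cast
  nlinarith [hZ, Int.natCast_nonneg (Nat.fib (a+d+e+5))]

lemma T_real_bound_le (n i j : ℕ) (h1 : 1 ≤ i) (hij : i ≤ j) (hj : j ≤ n) :
    |(Nat.fib (n+2) : ℝ) * (((VB 1 n).filter (fun A => i ∈ A ∧ j ∈ A)).card : ℝ)
      - ((Nat.fib i * Nat.fib (n+1-i) : ℕ) : ℝ) * ((Nat.fib j * Nat.fib (n+1-j) : ℕ) : ℝ)|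
      ≤ 4 * (1/2 : ℝ)^(j-i) * (Nat.fib (n+2) : ℝ)^2 := by
  classical
  have hN : (0:ℝ) ≤ (Nat.fib (n+2) : ℝ) := Nat.cast_nonneg _
  rcases eq_or_lt_of_le hij with rfl | hlt
  · -- j = i
    have hP : ((VB 1 n).filter (fun A => i ∈ A ∧ i ∈ A)).card
        = Nat.fib i * Nat.fib (n+1-i) := by
      rw [Finset.filter_congr (fun A _ => (and_self_iff (a := i ∈ A)))]
      exact count_single n i h1 hj
    rw [hP]
    have hci : ((Nat.fib i * Nat.fib (n+1-i) : ℕ) : ℝ) ≤ ((Nat.fib (n+2) : ℕ) : ℝ) :=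
      Nat.cast_le.mpr (c_le n i h1 hj)
    have hci0 : (0:ℝ) ≤ ((Nat.fib i * Nat.fib (n+1-i) : ℕ) : ℝ) := Nat.cast_nonneg _
    rw [show i - i = 0 from by omega, pow_zero, mul_one]
    rw [abs_of_nonneg (by nlinarith [mul_nonneg hci0 (sub_nonneg.mpr hci)])]
    nlinarith [mul_nonneg hci0 hci0, sq_nonneg ((Nat.fib (n+2) : ℝ))]
  · rcases eq_or_lt_of_le (show i + 1 ≤ j from hlt) with rfl | hlt2
    · -- j = i + 1
      rw [count_adj n i]
      have hci : ((Nat.fib i * Nat.fib (n+1-i) : ℕ) : ℝ) ≤ ((Nat.fib (n+2) : ℕ) : ℝ) :=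
        Nat.cast_le.mpr (c_le n i h1 (by omega))
      have hcj : ((Nat.fib (i+1) * Nat.fib (n+1-(i+1)) : ℕ) : ℝ) ≤ ((Nat.fib (n+2) : ℕ) : ℝ) :=
        Nat.cast_le.mpr (c_le n (i+1) (by omega) hj)
      have h0i : (0:ℝ) ≤ ((Nat.fib i * Nat.fib (n+1-i) : ℕ) : ℝ) := Nat.cast_nonneg _
      have h0j : (0:ℝ) ≤ ((Nat.fib (i+1) * Nat.fib (n+1-(i+1)) : ℕ) : ℝ) := Nat.cast_nonneg _
      rw [show i + 1 - i = 1 from by omega, pow_one]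
      simp only [Finset.card_empty, Nat.cast_zero, mul_zero, zero_sub, abs_neg]
      rw [abs_of_nonneg (by positivity)]
      nlinarith [mul_le_mul hci hcj h0j (Nat.cast_nonneg (Nat.fib (n+2)))]
    · -- j ≥ i + 2
      obtain ⟨a, rfl⟩ : ∃ a, i = a + 1 := ⟨i - 1, by omega⟩
      obtain ⟨d, rfl⟩ : ∃ d, j = a + d + 3 := ⟨j - a - 3, by omega⟩
      obtain ⟨e, rfl⟩ : ∃ e, n = a + d + e + 3 := ⟨n - a - d - 3, by omega⟩
      have hP := count_pair (a+d+e+3) (a+1) (a+d+3) (by omega) (by omega) (by omega)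
      rw [show a+d+3-(a+1)-1 = d+1 from by omega,
          show a+d+e+3+1-(a+d+3) = e+1 from by omega] at hP
      rw [hP]
      have hZ := T_bound_core a d e
      rw [show a+d+e+3+2 = a+d+e+5 from by omega,
          show a+d+e+3+1-(a+1) = d+e+3 from by omega,
          show a+d+e+3+1-(a+d+3) = e+1 from by omega,
          show a+d+3-(a+1) = d+2 from by omega]
      have hinner : (Nat.fib (a+d+e+5) : ℝ) * ((Nat.fib (a+1) * Nat.fib (d+1) * Nat.fib (e+1) : ℕ) : ℝ)
          - ((Nat.fib (a+1) * Nat.fib (d+e+3) : ℕ) : ℝ) * ((Nat.fib (a+d+3) * Nat.fib (e+1) : ℕ) : ℝ)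
          = (((Nat.fib (a+d+e+5) : ℤ) * (Nat.fib (a+1) * Nat.fib (d+1) * Nat.fib (e+1))
          - (Nat.fib (a+1) * Nat.fib (d+e+3) : ℤ) * (Nat.fib (a+d+3) * Nat.fib (e+1)) : ℤ) : ℝ) := by
        push_cast; ring
      rw [hinner, ← Int.cast_abs, div_pow, one_pow,
        show (4:ℝ) * (1 / 2^(d+2)) * (Nat.fib (a+d+e+5) : ℝ)^2
          = 4 * (Nat.fib (a+d+e+5) : ℝ)^2 / 2^(d+2) from by ring,
        le_div_iff₀ (by positivity)]
      have hZ' : |(Nat.fib (a+d+e+5) : ℤ) * (Nat.fib (a+1) * Nat.fib (d+1) * Nat.fib (e+1))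
          - (Nat.fib (a+1) * Nat.fib (d+e+3) : ℤ) * (Nat.fib (a+d+3) * Nat.fib (e+1))| * 2^(d+2)
          ≤ 4 * (Nat.fib (a+d+e+5) : ℤ)^2 := by linarith [hZ]
      exact_mod_cast hZ'

/-! ### Geometric sums -/

lemma geom_le (r : ℝ) (h0 : 0 ≤ r) (h1 : r < 1) (m : ℕ) :
    ∑ k ∈ Finset.range m, r^k ≤ 1/(1-r) := by
  rw [geom_sum_eq (by linarith)]
  have hd : (0:ℝ) < 1 - r := by linarith
  have he : (r^m - 1)/(r-1) = (1 - r^m)/(1-r) := by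
    have h : r - 1 ≠ 0 := by linarith
    field_simp
    ring
  rw [he, div_le_div_iff₀ hd hd]
  nlinarith [pow_nonneg h0 m]

lemma k_half (k : ℕ) : (k:ℝ) * (1/2)^k ≤ 2 * (3/4)^k := by
  induction k with
  | zero => norm_num
  | succ k ih =>
    have hp : ((1:ℝ)/2)^k ≤ ((3:ℝ)/4)^k := by
      apply pow_le_pow_left₀ (by norm_num) (by norm_num)
    push_cast [pow_succ]
    nlinarith [hp, pow_nonneg (by norm_num : (0:ℝ) ≤ 3/4) k,
      pow_nonneg (by norm_num : (0:ℝ) ≤ 1/2) k]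

lemma sum_reindex_le (s : Finset ℕ) (g : ℕ → ℕ) (hinj : ∀ x ∈ s, ∀ y ∈ s, g x = g y → x = y)
    (m : ℕ) (hmem : ∀ x ∈ s, g x < m) (f : ℕ → ℝ) (hf : ∀ k, 0 ≤ f k) :
    ∑ j ∈ s, f (g j) ≤ ∑ k ∈ Finset.range m, f k := by
  rw [← Finset.sum_image hinj]
  apply Finset.sum_le_sum_of_subset_of_nonneg
  · intro k hk
    rw [Finset.mem_image] at hk
    obtain ⟨x, hx, rfl⟩ := hk
    exact Finset.mem_range.mpr (hmem x hx)
  · exact fun k _ _ => hf k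

lemma geo_row (n i : ℕ) (hi : i ≤ n) :
    ∑ j ∈ Finset.Icc 1 n, ((1:ℝ)/2)^((i-j)+(j-i)) ≤ 4 := by
  classical
  rw [← Finset.sum_filter_add_sum_filter_not (Finset.Icc 1 n) (· ≤ i)]
  have hhalf : ∀ k : ℕ, (0:ℝ) ≤ (1/2)^k := fun k => by positivity
  have hgeom : ∀ m : ℕ, ∑ k ∈ Finset.range m, ((1:ℝ)/2)^k ≤ 2 := by
    intro m
    have := geom_le (1/2) (by norm_num) (by norm_num) m
    linarith [this]
  have h1 : ∑ j ∈ (Finset.Icc 1 n).filter (· ≤ i), ((1:ℝ)/2)^((i-j)+(j-i)) ≤ 2 := by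
    have he : ∀ j ∈ (Finset.Icc 1 n).filter (· ≤ i),
        ((1:ℝ)/2)^((i-j)+(j-i)) = ((1:ℝ)/2)^(i-j) := by
      intro j hj
      rw [Finset.mem_filter] at hj
      congr 1
      simp only [Finset.mem_Icc] at hj
      omega
    rw [Finset.sum_congr rfl he]
    calc ∑ j ∈ (Finset.Icc 1 n).filter (· ≤ i), ((1:ℝ)/2)^(i-j)
        ≤ ∑ k ∈ Finset.range (n+1), ((1:ℝ)/2)^k := by
          apply sum_reindex_le _ (fun j => i - j) ?_ _ ?_ _ hhalf
          · intro x hx y hy hxy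
            simp only [Finset.mem_filter, Finset.mem_Icc] at hx hy
            omega
          · intro x hx
            simp only [Finset.mem_filter, Finset.mem_Icc] at hx
            omega
      _ ≤ 2 := hgeom _
  have h2 : ∑ j ∈ (Finset.Icc 1 n).filter (fun j => ¬ j ≤ i), ((1:ℝ)/2)^((i-j)+(j-i)) ≤ 2 := by
    have he : ∀ j ∈ (Finset.Icc 1 n).filter (fun j => ¬ j ≤ i),
        ((1:ℝ)/2)^((i-j)+(j-i)) = ((1:ℝ)/2)^(j-i) := by
      intro j hj
      rw [Finset.mem_filter] at hj
      congr 1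
      simp only [Finset.mem_Icc] at hj
      omega
    rw [Finset.sum_congr rfl he]
    calc ∑ j ∈ (Finset.Icc 1 n).filter (fun j => ¬ j ≤ i), ((1:ℝ)/2)^(j-i)
        ≤ ∑ k ∈ Finset.range (n+1), ((1:ℝ)/2)^k := by
          apply sum_reindex_le _ (fun j => j - i) ?_ _ ?_ _ hhalf
          · intro x hx y hy hxy
            simp only [Finset.mem_filter, Finset.mem_Icc] at hx hy
            omega
          · intro x hx
            simp only [Finset.mem_filter, Finset.mem_Icc] at hx
            omega
      _ ≤ 2 := hgeom _
  linarith

lemma T_real_bound (n i j : ℕ) (h1 : 1 ≤ i) (h2 : 1 ≤ j) (hi : i ≤ n) (hj : j ≤ n) :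
    |(Nat.fib (n+2) : ℝ) * (((VB 1 n).filter (fun A => i ∈ A ∧ j ∈ A)).card : ℝ)
      - ((Nat.fib i * Nat.fib (n+1-i) : ℕ) : ℝ) * ((Nat.fib j * Nat.fib (n+1-j) : ℕ) : ℝ)|
      ≤ 4 * (1/2 : ℝ)^((i-j)+(j-i)) * (Nat.fib (n+2) : ℝ)^2 := by
  classical
  rcases le_total i j with h | h
  · rw [show (i-j)+(j-i) = j - i from by omega]
    exact T_real_bound_le n i j h1 h hj
  · rw [show (i-j)+(j-i) = i - j from by omega]
    have hsym : ((VB 1 n).filter (fun A => i ∈ A ∧ j ∈ A)).card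
        = ((VB 1 n).filter (fun A => j ∈ A ∧ i ∈ A)).card := by
      congr 1
      apply Finset.filter_congr
      intro A _
      exact and_comm
    rw [hsym, mul_comm ((Nat.fib i * Nat.fib (n+1-i) : ℕ) : ℝ)
      ((Nat.fib j * Nat.fib (n+1-j) : ℕ) : ℝ)]
    exact T_real_bound_le n j i h2 h hi

lemma var_total (n : ℕ) (w : ℕ → ℝ) (hw : ∀ i, |w i| ≤ 1) :
    (Nat.fib (n+2) : ℝ) * (∑ A ∈ VB 1 n, (∑ i ∈ Finset.Icc 1 n, if i ∈ A then w i else 0)^2)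
      - (∑ A ∈ VB 1 n, ∑ i ∈ Finset.Icc 1 n, if i ∈ A then w i else 0)^2
      ≤ 16 * n * (Nat.fib (n+2) : ℝ)^2 := by
  classical
  rw [moment1, moment2]
  have hexpand : (Nat.fib (n+2) : ℝ) * (∑ i ∈ Finset.Icc 1 n, ∑ j ∈ Finset.Icc 1 n,
        w i * w j * (((VB 1 n).filter (fun A => i ∈ A ∧ j ∈ A)).card : ℝ))
      - (∑ i ∈ Finset.Icc 1 n, w i * ((Nat.fib i * Nat.fib (n + 1 - i) : ℕ) : ℝ))^2
      = ∑ i ∈ Finset.Icc 1 n, ∑ j ∈ Finset.Icc 1 n,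
          w i * w j * ((Nat.fib (n+2) : ℝ) * (((VB 1 n).filter (fun A => i ∈ A ∧ j ∈ A)).card : ℝ)
            - ((Nat.fib i * Nat.fib (n+1-i) : ℕ) : ℝ) * ((Nat.fib j * Nat.fib (n+1-j) : ℕ) : ℝ)) := by
    rw [sq, Finset.sum_mul_sum, Finset.mul_sum, ← Finset.sum_sub_distrib]
    apply Finset.sum_congr rfl
    intro i _
    rw [Finset.mul_sum, ← Finset.sum_sub_distrib]
    apply Finset.sum_congr rfl
    intro j _
    ring
  rw [hexpand]
  have hcard : (Finset.Icc 1 n).card = n := by rw [Nat.card_Icc]; omega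
  calc ∑ i ∈ Finset.Icc 1 n, ∑ j ∈ Finset.Icc 1 n, w i * w j *
          ((Nat.fib (n+2) : ℝ) * (((VB 1 n).filter (fun A => i ∈ A ∧ j ∈ A)).card : ℝ)
            - ((Nat.fib i * Nat.fib (n+1-i) : ℕ) : ℝ) * ((Nat.fib j * Nat.fib (n+1-j) : ℕ) : ℝ))
      ≤ ∑ i ∈ Finset.Icc 1 n, ∑ j ∈ Finset.Icc 1 n,
          4 * (1/2 : ℝ)^((i-j)+(j-i)) * (Nat.fib (n+2) : ℝ)^2 := by
        apply Finset.sum_le_sum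
        intro i hi
        apply Finset.sum_le_sum
        intro j hj
        rw [Finset.mem_Icc] at hi hj
        have hT := T_real_bound n i j hi.1 hj.1 hi.2 hj.2
        have hww : |w i * w j| ≤ 1 := by
          rw [abs_mul]
          exact mul_le_one₀ (hw i) (abs_nonneg _) (hw j)
        calc w i * w j * _ ≤ |w i * w j * _| := le_abs_self _
          _ = |w i * w j| * |_| := abs_mul _ _
          _ ≤ 1 * |_| := by
              apply mul_le_mul_of_nonneg_right hww (abs_nonneg _)
          _ = |_| := one_mul _
          _ ≤ _ := hT
    _ ≤ ∑ i ∈ Finset.Icc 1 n, 16 * (Nat.fib (n+2) : ℝ)^2 := by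
        apply Finset.sum_le_sum
        intro i hi
        rw [Finset.mem_Icc] at hi
        have hrow := geo_row n i hi.2
        have h4 : ∑ j ∈ Finset.Icc 1 n, 4 * (1/2 : ℝ)^((i-j)+(j-i)) * (Nat.fib (n+2) : ℝ)^2
            = (∑ j ∈ Finset.Icc 1 n, ((1:ℝ)/2)^((i-j)+(j-i))) * (4 * (Nat.fib (n+2) : ℝ)^2) := by
          rw [Finset.sum_mul]
          apply Finset.sum_congr rfl
          intro j _
          ring
        rw [h4]
        have hN2 : (0:ℝ) ≤ 4 * (Nat.fib (n+2) : ℝ)^2 := by positivity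
        nlinarith [hrow, hN2]
    _ = 16 * n * (Nat.fib (n+2) : ℝ)^2 := by
        rw [Finset.sum_const, hcard, nsmul_eq_mul]
        ring

lemma mean_lower (n : ℕ) :
    (n : ℝ) * (Nat.fib (n+2) : ℝ)
      ≤ 10 * ∑ i ∈ Finset.Icc 1 n, ((Nat.fib i * Nat.fib (n+1-i) : ℕ) : ℝ) := by
  rw [Finset.mul_sum]
  have hcard : (Finset.Icc 1 n).card = n := by rw [Nat.card_Icc]; omega
  calc (n : ℝ) * (Nat.fib (n+2) : ℝ) = ∑ _i ∈ Finset.Icc 1 n, (Nat.fib (n+2) : ℝ) := by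
        rw [Finset.sum_const, hcard, nsmul_eq_mul]
    _ ≤ ∑ i ∈ Finset.Icc 1 n, 10 * ((Nat.fib i * Nat.fib (n+1-i) : ℕ) : ℝ) := by
        apply Finset.sum_le_sum
        intro i hi
        rw [Finset.mem_Icc] at hi
        have := c_lower n i hi.1 hi.2
        exact_mod_cast this

/-! ### Abel summation -/

lemma abel_id (w cR : ℕ → ℝ) : ∀ m : ℕ,
    ∑ k ∈ Finset.Icc 1 m, w k * cR k
      = (∑ i ∈ Finset.Icc 1 m, w i) * cR m
        + ∑ k ∈ Finset.Icc 1 (m-1), (∑ i ∈ Finset.Icc 1 k, w i) * (cR k - cR (k+1)) := by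
  intro m
  induction m with
  | zero => simp
  | succ m ih =>
    rw [Finset.sum_Icc_succ_top (by omega : 1 ≤ m + 1) (fun k => w k * cR k),
        Finset.sum_Icc_succ_top (by omega : 1 ≤ m + 1) w, ih]
    rw [show m + 1 - 1 = m from rfl]
    rcases Nat.eq_zero_or_pos m with rfl | hm
    · simp
    · obtain ⟨m', rfl⟩ : ∃ m'', m = m'' + 1 := ⟨m - 1, by omega⟩
      rw [show m' + 1 - 1 = m' from rfl]
      rw [Finset.sum_Icc_succ_top (by omega : 1 ≤ m' + 1)
        (fun k => (∑ i ∈ Finset.Icc 1 k, w i) * (cR k - cR (k+1)))]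
      ring

lemma half_pow_le {x N : ℝ} (k l : ℕ) (hkl : k ≤ l) (h : 2^l * x ≤ N) (hx : 0 ≤ x)
    (hN : 0 ≤ N) : x ≤ (1/2)^k * N := by
  have h2l : (0:ℝ) < 2^l := by positivity
  have hx' : x ≤ N / 2^l := by rwa [le_div_iff₀ h2l, mul_comm]
  have heq : ((1:ℝ)/2)^k * N = N / 2^k := by
    rw [div_pow, one_pow]
    ring
  rw [heq]
  calc x ≤ N / 2^l := hx'
    _ ≤ N / 2^k := by
        apply div_le_div_of_nonneg_left hN (by positivity)
        exact pow_le_pow_right₀ (by norm_num) hkl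

lemma delta_bound (n k : ℕ) (h1 : 1 ≤ k) (h2 : k + 1 ≤ n) :
    |((Nat.fib (k+1) * Nat.fib (n+1-(k+1)) : ℕ) : ℝ) - ((Nat.fib k * Nat.fib (n+1-k) : ℕ) : ℝ)|
      ≤ ((1/2:ℝ)^k + (1/2:ℝ)^(n-k)) * (Nat.fib (n+2) : ℝ) := by
  have hN : (0:ℝ) ≤ (Nat.fib (n+2) : ℝ) := Nat.cast_nonneg _
  have hp1 : (0:ℝ) ≤ ((1:ℝ)/2)^k := by positivity
  have hp2 : (0:ℝ) ≤ ((1:ℝ)/2)^(n-k) := by positivity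
  set T : ℤ := (Nat.fib (k+1) : ℤ) * Nat.fib (n-k) - (Nat.fib k : ℤ) * Nat.fib (n-k+1) with hT
  have hinner : ((Nat.fib (k+1) * Nat.fib (n+1-(k+1)) : ℕ) : ℝ) - ((Nat.fib k * Nat.fib (n+1-k) : ℕ) : ℝ)
      = ((T : ℤ) : ℝ) := by
    rw [hT, show n+1-(k+1) = n-k from by omega, show n+1-k = n-k+1 from by omega]
    push_cast
    ring
  rw [hinner, ← Int.cast_abs]
  rcases le_or_gt (2*k) n with hc | hc
  · -- |Δ| = fib (n - 2k)
    have hD := fibD k (n-k) (by omega)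
    rw [show n-k-k = n-2*k from by omega] at hD
    have habs : |T| = (Nat.fib (n-2*k) : ℤ) := by
      rw [hT, show (Nat.fib (k+1) : ℤ) * Nat.fib (n-k) - (Nat.fib k : ℤ) * Nat.fib (n-k+1)
          = -((Nat.fib k : ℤ) * Nat.fib ((n-k)+1) - (Nat.fib (k+1) : ℤ) * Nat.fib (n-k)) from by ring,
        abs_neg, hD, abs_mul, abs_pow, abs_neg, abs_one, one_pow, one_mul,
        abs_of_nonneg (Int.natCast_nonneg _)]
    rw [habs]
    have hub : 2^(k+1) * Nat.fib (n-2*k) ≤ Nat.fib (n+2) := by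
      have h := fib_pow_le (k+1) (n-2*k)
      rwa [show n-2*k+2*(k+1) = n+2 from by omega] at h
    have hR : ((Nat.fib (n-2*k) : ℕ) : ℝ) ≤ (1/2:ℝ)^k * (Nat.fib (n+2) : ℝ) := by
      apply half_pow_le k (k+1) (by omega) ?_ (by positivity) hN
      exact_mod_cast hub
    push_cast at hR ⊢
    nlinarith [hR, mul_nonneg hp2 hN]
  · -- |Δ| = fib (2k - n)
    have hD := fibD (n-k) k (by omega)
    rw [show k-(n-k) = 2*k-n from by omega] at hD
    have habs : |T| = (Nat.fib (2*k-n) : ℤ) := by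
      rw [hT, show (Nat.fib (k+1) : ℤ) * Nat.fib (n-k) - (Nat.fib k : ℤ) * Nat.fib (n-k+1)
          = (Nat.fib (n-k) : ℤ) * Nat.fib (k+1) - (Nat.fib (n-k+1) : ℤ) * Nat.fib k from by ring,
        hD, abs_mul, abs_pow, abs_neg, abs_one, one_pow, one_mul,
        abs_of_nonneg (Int.natCast_nonneg _)]
    rw [habs]
    have hub : 2^(n-k+1) * Nat.fib (2*k-n) ≤ Nat.fib (n+2) := by
      have h := fib_pow_le (n-k+1) (2*k-n)
      rwa [show 2*k-n+2*(n-k+1) = n+2 from by omega] at h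
    have hR : ((Nat.fib (2*k-n) : ℕ) : ℝ) ≤ (1/2:ℝ)^(n-k) * (Nat.fib (n+2) : ℝ) := by
      apply half_pow_le (n-k) (n-k+1) (by omega) ?_ (by positivity) hN
      exact_mod_cast hub
    push_cast at hR ⊢
    nlinarith [hR, mul_nonneg hp1 hN]

lemma abel_bound (n : ℕ) (hn : 1 ≤ n) (w : ℕ → ℝ) (hw : ∀ i, |w i| ≤ 1) :
    |∑ k ∈ Finset.Icc 1 n, w k * ((Nat.fib k * Nat.fib (n+1-k) : ℕ) : ℝ)|
      ≤ (3 * |∑ i ∈ Finset.Icc 1 n, w i| + 20) * (Nat.fib (n+2) : ℝ) := by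
  classical
  have hN : (0:ℝ) ≤ (Nat.fib (n+2) : ℝ) := Nat.cast_nonneg _
  have hIoc : ∀ a b : ℕ, Finset.Icc (a+1) b = Finset.Ioc a b := by
    intro a b
    ext x
    simp only [Finset.mem_Icc, Finset.mem_Ioc]
    omega
  have hWk : ∀ k : ℕ, |∑ i ∈ Finset.Icc 1 k, w i| ≤ (k : ℝ) := by
    intro k
    calc |∑ i ∈ Finset.Icc 1 k, w i| ≤ ∑ i ∈ Finset.Icc 1 k, |w i| :=
        Finset.abs_sum_le_sum_abs _ _
      _ ≤ ∑ _i ∈ Finset.Icc 1 k, 1 := Finset.sum_le_sum (fun i _ => hw i)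
      _ ≤ (k : ℝ) := by
          rw [Finset.sum_const, Nat.card_Icc, nsmul_eq_mul, mul_one]
          norm_num
  have hWk2 : ∀ k : ℕ, k ≤ n → |∑ i ∈ Finset.Icc 1 k, w i|
      ≤ |∑ i ∈ Finset.Icc 1 n, w i| + ((n - k : ℕ) : ℝ) := by
    intro k hk
    have hsplit : (∑ i ∈ Finset.Icc 1 k, w i) + ∑ i ∈ Finset.Icc (k+1) n, w i
        = ∑ i ∈ Finset.Icc 1 n, w i := by
      rw [show (1:ℕ) = 0 + 1 from rfl, hIoc 0 k, hIoc k n, hIoc 0 n]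
      exact Finset.sum_Ioc_consecutive _ (by omega) hk
    have htail : |∑ i ∈ Finset.Icc (k+1) n, w i| ≤ ((n - k : ℕ) : ℝ) := by
      calc |∑ i ∈ Finset.Icc (k+1) n, w i| ≤ ∑ i ∈ Finset.Icc (k+1) n, |w i| :=
          Finset.abs_sum_le_sum_abs _ _
        _ ≤ ∑ _i ∈ Finset.Icc (k+1) n, 1 := Finset.sum_le_sum (fun i _ => hw i)
        _ ≤ ((n - k : ℕ) : ℝ) := by
            rw [Finset.sum_const, Nat.card_Icc, nsmul_eq_mul, mul_one]
            norm_cast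
            omega
    calc |∑ i ∈ Finset.Icc 1 k, w i|
        = |(∑ i ∈ Finset.Icc 1 n, w i) - ∑ i ∈ Finset.Icc (k+1) n, w i| := by
          rw [← hsplit]; ring_nf
      _ ≤ |∑ i ∈ Finset.Icc 1 n, w i| + |∑ i ∈ Finset.Icc (k+1) n, w i| := abs_sub _ _
      _ ≤ |∑ i ∈ Finset.Icc 1 n, w i| + ((n - k : ℕ) : ℝ) := by linarith [htail]
  -- geometric sums
  have hg34 : ∀ m : ℕ, ∑ t ∈ Finset.range m, ((3:ℝ)/4)^t ≤ 4 := by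
    intro m
    have := geom_le (3/4) (by norm_num) (by norm_num) m
    norm_num at this
    linarith
  have hkp : ∀ t : ℕ, (0:ℝ) ≤ (t:ℝ)*(1/2)^t := fun t => by positivity
  have hg1 : ∑ k ∈ Finset.Icc 1 (n-1), (k:ℝ)*(1/2:ℝ)^k ≤ 8 := by
    calc ∑ k ∈ Finset.Icc 1 (n-1), (k:ℝ)*(1/2:ℝ)^k
        ≤ ∑ k ∈ Finset.Icc 1 (n-1), 2*((3:ℝ)/4)^k :=
          Finset.sum_le_sum (fun k _ => k_half k)
      _ ≤ ∑ t ∈ Finset.range (n+1), 2*((3:ℝ)/4)^t := by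
          apply sum_reindex_le _ (fun x => x) ?_ _ ?_ (fun t => 2*((3:ℝ)/4)^t)
            (fun t => by positivity)
          · intro x _ y _ h
            exact h
          · intro x hx
            simp only [Finset.mem_Icc] at hx
            omega
      _ = 2 * ∑ t ∈ Finset.range (n+1), ((3:ℝ)/4)^t := by
          rw [Finset.mul_sum]
      _ ≤ 8 := by linarith [hg34 (n+1)]
  have hg2 : ∑ k ∈ Finset.Icc 1 (n-1), (1/2:ℝ)^(n-k) ≤ 2 := by
    calc ∑ k ∈ Finset.Icc 1 (n-1), (1/2:ℝ)^(n-k)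
        ≤ ∑ t ∈ Finset.range (n+1), (1/2:ℝ)^t := by
          apply sum_reindex_le _ (fun k => n - k) ?_ _ ?_ (fun t => (1/2:ℝ)^t)
            (fun t => by positivity)
          · intro x hx y hy h
            simp only [Finset.mem_Icc] at hx hy
            omega
          · intro x hx
            simp only [Finset.mem_Icc] at hx
            omega
      _ ≤ 2 := by
          have := geom_le (1/2) (by norm_num) (by norm_num) (n+1)
          norm_num at this
          linarith
  have hg3 : ∑ k ∈ Finset.Icc 1 (n-1), ((n-k : ℕ):ℝ)*(1/2:ℝ)^(n-k) ≤ 8 := by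
    calc ∑ k ∈ Finset.Icc 1 (n-1), ((n-k : ℕ):ℝ)*(1/2:ℝ)^(n-k)
        ≤ ∑ t ∈ Finset.range (n+1), (t:ℝ)*(1/2:ℝ)^t := by
          apply sum_reindex_le _ (fun k => n - k) ?_ _ ?_ (fun t => (t:ℝ)*(1/2:ℝ)^t) hkp
          · intro x hx y hy h
            simp only [Finset.mem_Icc] at hx hy
            omega
          · intro x hx
            simp only [Finset.mem_Icc] at hx
            omega
      _ ≤ ∑ t ∈ Finset.range (n+1), 2*((3:ℝ)/4)^t :=
          Finset.sum_le_sum (fun t _ => k_half t)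
      _ = 2 * ∑ t ∈ Finset.range (n+1), ((3:ℝ)/4)^t := by rw [Finset.mul_sum]
      _ ≤ 8 := by linarith [hg34 (n+1)]
  -- per-term bound
  have hterm : ∀ k ∈ Finset.Icc 1 (n-1),
      |(∑ i ∈ Finset.Icc 1 k, w i) * (((Nat.fib k * Nat.fib (n+1-k) : ℕ) : ℝ)
          - ((Nat.fib (k+1) * Nat.fib (n+1-(k+1)) : ℕ) : ℝ))|
        ≤ ((k:ℝ)*(1/2:ℝ)^k + |∑ i ∈ Finset.Icc 1 n, w i| * (1/2:ℝ)^(n-k)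
            + ((n-k : ℕ):ℝ) * (1/2:ℝ)^(n-k)) * (Nat.fib (n+2):ℝ) := by
    intro k hk
    rw [Finset.mem_Icc] at hk
    have hd := delta_bound n k hk.1 (by omega)
    rw [abs_mul, abs_sub_comm]
    have hW1 := hWk k
    have hW2 := hWk2 k (by omega)
    have habsnn : 0 ≤ |∑ i ∈ Finset.Icc 1 k, w i| := abs_nonneg _
    have hxd : (0:ℝ) ≤ (1/2:ℝ)^k := by positivity
    have hyd : (0:ℝ) ≤ (1/2:ℝ)^(n-k) := by positivity
    have hA := mul_le_mul_of_nonneg_left hd habsnn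
    have hB := mul_le_mul_of_nonneg_right hW1 (mul_nonneg hxd hN)
    have hC := mul_le_mul_of_nonneg_right hW2 (mul_nonneg hyd hN)
    nlinarith [hA, hB, hC]
  -- assemble
  have hid := abel_id w (fun k => ((Nat.fib k * Nat.fib (n+1-k) : ℕ) : ℝ)) n
  rw [hid]
  have hcn : |((Nat.fib n * Nat.fib (n+1-n) : ℕ) : ℝ)| ≤ (Nat.fib (n+2) : ℝ) := by
    rw [abs_of_nonneg (Nat.cast_nonneg _)]
    exact_mod_cast c_le n n hn le_rfl
  have hsum2 : ∑ k ∈ Finset.Icc 1 (n-1),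
      |(∑ i ∈ Finset.Icc 1 k, w i) * (((Nat.fib k * Nat.fib (n+1-k) : ℕ) : ℝ)
          - ((Nat.fib (k+1) * Nat.fib (n+1-(k+1)) : ℕ) : ℝ))|
      ≤ (8 + |∑ i ∈ Finset.Icc 1 n, w i| * 2 + 8) * (Nat.fib (n+2):ℝ) := by
    calc ∑ k ∈ Finset.Icc 1 (n-1),
        |(∑ i ∈ Finset.Icc 1 k, w i) * (((Nat.fib k * Nat.fib (n+1-k) : ℕ) : ℝ)
          - ((Nat.fib (k+1) * Nat.fib (n+1-(k+1)) : ℕ) : ℝ))|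
        ≤ ∑ k ∈ Finset.Icc 1 (n-1), ((k:ℝ)*(1/2:ℝ)^k
            + |∑ i ∈ Finset.Icc 1 n, w i| * (1/2:ℝ)^(n-k)
            + ((n-k : ℕ):ℝ) * (1/2:ℝ)^(n-k)) * (Nat.fib (n+2):ℝ) :=
          Finset.sum_le_sum hterm
      _ = (∑ k ∈ Finset.Icc 1 (n-1), ((k:ℝ)*(1/2:ℝ)^k
            + |∑ i ∈ Finset.Icc 1 n, w i| * (1/2:ℝ)^(n-k)
            + ((n-k : ℕ):ℝ) * (1/2:ℝ)^(n-k))) * (Nat.fib (n+2):ℝ) := by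
          rw [Finset.sum_mul]
      _ = ((∑ k ∈ Finset.Icc 1 (n-1), (k:ℝ)*(1/2:ℝ)^k)
            + |∑ i ∈ Finset.Icc 1 n, w i| * (∑ k ∈ Finset.Icc 1 (n-1), (1/2:ℝ)^(n-k))
            + (∑ k ∈ Finset.Icc 1 (n-1), ((n-k : ℕ):ℝ)*(1/2:ℝ)^(n-k))) * (Nat.fib (n+2):ℝ) := by
          rw [Finset.sum_add_distrib, Finset.sum_add_distrib, Finset.mul_sum]
      _ ≤ (8 + |∑ i ∈ Finset.Icc 1 n, w i| * 2 + 8) * (Nat.fib (n+2):ℝ) := by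
          apply mul_le_mul_of_nonneg_right ?_ hN
          have h2 := mul_le_mul_of_nonneg_left hg2 (abs_nonneg (∑ i ∈ Finset.Icc 1 n, w i))
          linarith [hg1, hg3, h2]
  calc |(∑ i ∈ Finset.Icc 1 n, w i) * ((Nat.fib n * Nat.fib (n+1-n) : ℕ) : ℝ)
        + ∑ k ∈ Finset.Icc 1 (n-1), (∑ i ∈ Finset.Icc 1 k, w i)
            * (((Nat.fib k * Nat.fib (n+1-k) : ℕ) : ℝ) - ((Nat.fib (k+1) * Nat.fib (n+1-(k+1)) : ℕ) : ℝ))|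
      ≤ |(∑ i ∈ Finset.Icc 1 n, w i) * ((Nat.fib n * Nat.fib (n+1-n) : ℕ) : ℝ)|
        + |∑ k ∈ Finset.Icc 1 (n-1), (∑ i ∈ Finset.Icc 1 k, w i)
            * (((Nat.fib k * Nat.fib (n+1-k) : ℕ) : ℝ) - ((Nat.fib (k+1) * Nat.fib (n+1-(k+1)) : ℕ) : ℝ))| :=
        abs_add_le _ _
    _ ≤ |∑ i ∈ Finset.Icc 1 n, w i| * (Nat.fib (n+2) : ℝ)
        + ∑ k ∈ Finset.Icc 1 (n-1),
          |(∑ i ∈ Finset.Icc 1 k, w i) * (((Nat.fib k * Nat.fib (n+1-k) : ℕ) : ℝ)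
            - ((Nat.fib (k+1) * Nat.fib (n+1-(k+1)) : ℕ) : ℝ))| := by
        apply add_le_add
        · rw [abs_mul]
          exact mul_le_mul_of_nonneg_left hcn (abs_nonneg _)
        · exact Finset.abs_sum_le_sum_abs _ _
    _ ≤ |∑ i ∈ Finset.Icc 1 n, w i| * (Nat.fib (n+2) : ℝ)
        + (8 + |∑ i ∈ Finset.Icc 1 n, w i| * 2 + 8) * (Nat.fib (n+2):ℝ) := by
        linarith [hsum2]
    _ ≤ (3 * |∑ i ∈ Finset.Icc 1 n, w i| + 20) * (Nat.fib (n+2) : ℝ) := by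
        nlinarith [abs_nonneg (∑ i ∈ Finset.Icc 1 n, w i), hN]

/-! ### Key bound for fixed n -/

set_option maxHeartbeats 1600000 in
lemma key_bound (n : ℕ) (hn : 1 ≤ n) (S : Set ℕ) (q δ ε : ℝ) (hq0 : 0 ≤ q) (hq1 : q ≤ 1)
    (hδpos : 0 < δ) (hδ20 : δ ≤ 1/20) (hδε : 20*δ < ε)
    [DecidablePred (fun i => Fib i ∈ S)] [DecidablePred (fun A : Finset ℕ =>
      ¬ (|((A.filter (fun i => Fib i ∈ S)).card : ℝ)/(A.card : ℝ) - q| < ε))]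
    (hWn : 3*|∑ i ∈ Finset.Icc 1 n, ((if Fib i ∈ S then (1:ℝ) else 0) - q)| + 20 ≤ (δ/2)*n) :
    (((VB 1 n).filter (fun A : Finset ℕ =>
        ¬ (|((A.filter (fun i => Fib i ∈ S)).card : ℝ)/(A.card : ℝ) - q| < ε))).card : ℝ)
      ≤ 80/(δ^2*n) * (Nat.fib (n+2) : ℝ) := by
  classical
  set w : ℕ → ℝ := fun i => (if Fib i ∈ S then (1:ℝ) else 0) - q with hwdef
  have hwabs : ∀ i, |w i| ≤ 1 := by
    intro i
    rw [hwdef]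
    by_cases h : Fib i ∈ S <;> simp [h, abs_le] <;> constructor <;> linarith
  have hNpos : 0 < (Nat.fib (n+2) : ℝ) := by
    have := Nat.fib_pos.mpr (show 0 < n + 2 by omega)
    exact_mod_cast this
  have hcardV : ((VB 1 n).card : ℝ) = (Nat.fib (n+2) : ℝ) := by
    rw [card_VB1]
  have hnR : (0:ℝ) < (n:ℝ) := by exact_mod_cast hn
  -- indicator representations
  have hGrep : ∀ A ∈ VB 1 n,
      (∑ i ∈ Finset.Icc 1 n, if i ∈ A then (1:ℝ) else 0) = (A.card : ℝ) := by
    intro A hA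
    have hsub := (mem_VB.mp hA).1
    rw [Finset.sum_boole]
    congr 1
    rw [Finset.filter_mem_eq_inter, Finset.inter_eq_right.mpr hsub]
  have hFrep : ∀ A ∈ VB 1 n,
      (∑ i ∈ Finset.Icc 1 n, if i ∈ A then w i else 0)
        = ((A.filter (fun i => Fib i ∈ S)).card : ℝ) - q * (A.card : ℝ) := by
    intro A hA
    have hsub := (mem_VB.mp hA).1
    have hsplit : ∀ i, (if i ∈ A then w i else 0)
        = (if i ∈ A ∧ Fib i ∈ S then (1:ℝ) else 0) - q * (if i ∈ A then (1:ℝ) else 0) := by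
      intro i
      rw [hwdef]
      by_cases h1 : i ∈ A <;> by_cases h2 : Fib i ∈ S <;> simp [h1, h2]
    rw [Finset.sum_congr rfl (fun i _ => hsplit i), Finset.sum_sub_distrib, ← Finset.mul_sum,
      Finset.sum_boole, Finset.sum_boole]
    have h1 : (Finset.Icc 1 n).filter (fun i => i ∈ A ∧ Fib i ∈ S)
        = A.filter (fun i => Fib i ∈ S) := by
      ext x
      simp only [Finset.mem_filter]
      constructor
      · rintro ⟨-, h, h'⟩
        exact ⟨h, h'⟩
      · rintro ⟨h, h'⟩
        exact ⟨hsub h, h, h'⟩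
    have h2 : (Finset.Icc 1 n).filter (fun i => i ∈ A) = A := by
      rw [Finset.filter_mem_eq_inter, Finset.inter_eq_right.mpr hsub]
    rw [h1, h2]
  -- variance bounds
  set G : Finset ℕ → ℝ := fun A => ∑ i ∈ Finset.Icc 1 n, if i ∈ A then (1:ℝ) else 0 with hGdef
  set F : Finset ℕ → ℝ := fun A => ∑ i ∈ Finset.Icc 1 n, if i ∈ A then w i else 0 with hFdef
  set μG : ℝ := (∑ A ∈ VB 1 n, G A) / ((VB 1 n).card : ℝ) with hμG
  set μF : ℝ := (∑ A ∈ VB 1 n, F A) / ((VB 1 n).card : ℝ) with hμF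
  have hvarG : ∑ A ∈ VB 1 n, (G A - μG)^2 ≤ (16*n) * ((VB 1 n).card : ℝ) := by
    apply var_est _ _ _ (by rw [hcardV]; exact hNpos)
    rw [hcardV]
    calc (Nat.fib (n+2) : ℝ) * (∑ A ∈ VB 1 n, (G A)^2) - (∑ A ∈ VB 1 n, G A)^2
        ≤ 16 * n * (Nat.fib (n+2) : ℝ)^2 :=
          var_total n (fun _ => (1:ℝ)) (fun i => by norm_num)
      _ = 16*n * ((Nat.fib (n+2) : ℝ))^2 := by ring
      _ ≤ (16*n) * ((Nat.fib (n+2) : ℝ))^2 := le_refl _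
  have hvarF : ∑ A ∈ VB 1 n, (F A - μF)^2 ≤ (16*n) * ((VB 1 n).card : ℝ) := by
    apply var_est _ _ _ (by rw [hcardV]; exact hNpos)
    rw [hcardV]
    exact var_total n w hwabs
  -- mean bounds
  have hSG : ∑ A ∈ VB 1 n, G A = ∑ i ∈ Finset.Icc 1 n, ((Nat.fib i * Nat.fib (n+1-i) : ℕ) : ℝ) := by
    rw [hGdef]
    have := moment1 n (fun _ => (1:ℝ))
    simpa using this
  have hSF : ∑ A ∈ VB 1 n, F A = ∑ i ∈ Finset.Icc 1 n, w i * ((Nat.fib i * Nat.fib (n+1-i) : ℕ) : ℝ) :=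
    moment1 n w
  have hμGlow : (n:ℝ)/10 ≤ μG := by
    rw [hμG, hSG, hcardV, le_div_iff₀ hNpos]
    have := mean_lower n
    nlinarith [this, hNpos]
  have hμFsmall : |μF| ≤ (δ/2) * n := by
    rw [hμF, hSF, hcardV]
    have habel := abel_bound n hn w hwabs
    rw [abs_div, abs_of_pos hNpos, div_le_iff₀ hNpos]
    calc |∑ i ∈ Finset.Icc 1 n, w i * ((Nat.fib i * Nat.fib (n+1-i) : ℕ) : ℝ)|
        ≤ (3 * |∑ i ∈ Finset.Icc 1 n, w i| + 20) * (Nat.fib (n+2) : ℝ) := habel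
      _ ≤ ((δ/2)*n) * (Nat.fib (n+2) : ℝ) := by
          apply mul_le_mul_of_nonneg_right ?_ (le_of_lt hNpos)
          exact hWn
  -- Chebyshev
  set B1 : Finset (Finset ℕ) := (VB 1 n).filter (fun A => δ*n ≤ |G A - μG|) with hB1
  set B2 : Finset (Finset ℕ) := (VB 1 n).filter (fun A => (δ/2)*n ≤ |F A - μF|) with hB2
  have hcheb1 : (δ*n)^2 * (B1.card : ℝ) ≤ (16*n) * ((VB 1 n).card : ℝ) :=
    le_trans (cheb (VB 1 n) G μG (δ*n) (by positivity) _ (fun a h => h)) hvarG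
  have hcheb2 : ((δ/2)*n)^2 * (B2.card : ℝ) ≤ (16*n) * ((VB 1 n).card : ℝ) :=
    le_trans (cheb (VB 1 n) F μF ((δ/2)*n) (by positivity) _ (fun a h => h)) hvarF
  -- inclusion
  have hincl : (VB 1 n).filter (fun A : Finset ℕ =>
      ¬ (|((A.filter (fun i => Fib i ∈ S)).card : ℝ)/(A.card : ℝ) - q| < ε)) ⊆ B1 ∪ B2 := by
    intro A hA
    rw [Finset.mem_filter] at hA
    obtain ⟨hAV, hbad⟩ := hA
    rw [Finset.mem_union, hB1, hB2, Finset.mem_filter, Finset.mem_filter]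
    by_contra hcon
    push_neg at hcon
    obtain ⟨hc1, hc2⟩ := hcon
    have h1 : |G A - μG| < δ*n := hc1 hAV
    have h2 : |F A - μF| < (δ/2)*n := hc2 hAV
    apply hbad
    have hGA : G A = (A.card : ℝ) := hGrep A hAV
    have hFA : F A = ((A.filter (fun i => Fib i ∈ S)).card : ℝ) - q * (A.card : ℝ) := hFrep A hAV
    have hX : (n:ℝ)/20 ≤ (A.card : ℝ) := by
      rw [← hGA]
      have := abs_lt.mp h1
      nlinarith [hμGlow]
    have hXpos : (0:ℝ) < (A.card : ℝ) := by nlinarith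
    have hF : |F A| ≤ δ * n := by
      have := abs_lt.mp h2
      have h3 := hμFsmall
      rw [abs_le] at h3 ⊢
      constructor <;> nlinarith [h3.1, h3.2, this.1, this.2]
    have heq : ((A.filter (fun i => Fib i ∈ S)).card : ℝ)/(A.card : ℝ) - q
        = F A / (A.card : ℝ) := by
      rw [hFA]
      field_simp
    rw [heq, abs_div, abs_of_pos hXpos, div_lt_iff₀ hXpos]
    calc |F A| ≤ δ * n := hF
      _ = 20 * δ * ((n:ℝ)/20) := by ring
      _ < ε * ((n:ℝ)/20) := by
          apply mul_lt_mul_of_pos_right hδε (by positivity)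
      _ ≤ ε * (A.card : ℝ) := by
          apply mul_le_mul_of_nonneg_left hX (by linarith)
  -- combine
  have hcard : (((VB 1 n).filter (fun A : Finset ℕ =>
      ¬ (|((A.filter (fun i => Fib i ∈ S)).card : ℝ)/(A.card : ℝ) - q| < ε))).card : ℝ)
      ≤ (B1.card : ℝ) + (B2.card : ℝ) := by
    have h := Finset.card_le_card hincl
    have h2 := Finset.card_union_le B1 B2
    exact_mod_cast le_trans h h2
  have hb1 : (B1.card : ℝ) ≤ 16/(δ^2*n) * (Nat.fib (n+2) : ℝ) := by
    rw [hcardV] at hcheb1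
    have hpos : (0:ℝ) < (δ*n)^2 := by positivity
    rw [show (16:ℝ)/(δ^2*n) * (Nat.fib (n+2) : ℝ) = (16*n) * (Nat.fib (n+2) : ℝ) / (δ*n)^2 from by
      field_simp]
    rw [le_div_iff₀ hpos]
    linarith [hcheb1]
  have hb2 : (B2.card : ℝ) ≤ 64/(δ^2*n) * (Nat.fib (n+2) : ℝ) := by
    rw [hcardV] at hcheb2
    have hpos : (0:ℝ) < ((δ/2)*n)^2 := by positivity
    rw [show (64:ℝ)/(δ^2*n) * (Nat.fib (n+2) : ℝ) = (16*n) * (Nat.fib (n+2) : ℝ) / ((δ/2)*n)^2 from by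
      field_simp; ring]
    rw [le_div_iff₀ hpos]
    linarith [hcheb2]
  calc (((VB 1 n).filter (fun A : Finset ℕ =>
      ¬ (|((A.filter (fun i => Fib i ∈ S)).card : ℝ)/(A.card : ℝ) - q| < ε))).card : ℝ)
      ≤ (B1.card : ℝ) + (B2.card : ℝ) := hcard
    _ ≤ 16/(δ^2*n) * (Nat.fib (n+2) : ℝ) + 64/(δ^2*n) * (Nat.fib (n+2) : ℝ) := add_le_add hb1 hb2
    _ = 80/(δ^2*n) * (Nat.fib (n+2) : ℝ) := by ring

lemma card_split {α : Type*} (s : Finset α) (p : α → Prop) [DecidablePred p]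
    [DecidablePred (fun a => ¬ p a)] :
    (s.filter p).card + (s.filter (fun a => ¬ p a)).card = s.card := by
  classical
  have h := Finset.card_filter_add_card_filter_not (s := s) (p := p)
  convert h using 3 <;> exact Subsingleton.elim _ _

end ZeckAux

open ZeckAux

open Classical in
/-- **Density Theorem for Zeckendorf Decompositions.** Let `S` be a subset of the
Fibonacci numbers with asymptotic density `q(S)`. For `m` chosen uniformly at random from
the integers in `[0, F_{n+1})`, let `X_n(m)` be the number of Zeckendorf summands of `m`
and `Y_n(m)` the number of those summands lying in `S`. Then for every `ε > 0`,
`Prob(|Y_n(m)/X_n(m) - q(S)| < ε) → 1` as `n → ∞`. -/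
theorem density_theorem_zeckendorf
    (ZD : ℕ → Finset ℕ)
    (hZD : ∀ m : ℕ,
      (∀ i ∈ ZD m, 1 ≤ i) ∧
      (∀ i ∈ ZD m, ∀ j ∈ ZD m, i < j → i + 1 < j) ∧
      m = ∑ i ∈ ZD m, Fib i)
    (S : Set ℕ) (q : ℝ)
    (hq : Filter.Tendsto
      (fun n : ℕ => (((Finset.Icc 1 n).filter (fun i => Fib i ∈ S)).card : ℝ) / n)
      Filter.atTop (nhds q))
    (ε : ℝ) (hε : 0 < ε) :
    Filter.Tendsto
      (fun n : ℕ =>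
        (((Finset.range (Fib (n + 1))).filter (fun m =>
          |((((ZD m).filter (fun i => Fib i ∈ S)).card : ℝ) / ((ZD m).card : ℝ)) - q|
            < ε)).card : ℝ) / (Fib (n + 1) : ℝ))
      Filter.atTop (nhds 1) := by
  classical
  have hq0 : 0 ≤ q := by
    apply ge_of_tendsto' hq
    intro n
    exact div_nonneg (Nat.cast_nonneg _) (Nat.cast_nonneg _)
  have hq1 : q ≤ 1 := by
    apply le_of_tendsto' hq
    intro n
    rcases Nat.eq_zero_or_pos n with rfl | hn
    · norm_num
    · rw [div_le_one (by exact_mod_cast hn)]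
      have h := Finset.card_filter_le (Finset.Icc 1 n) (fun i => Fib i ∈ S)
      have h2 : (Finset.Icc 1 n).card = n := by rw [Nat.card_Icc]; omega
      rw [h2] at h
      exact_mod_cast h
  set δ : ℝ := min (ε/40) (1/20) with hδ
  have hδpos : 0 < δ := lt_min (by positivity) (by norm_num)
  have hδ20 : δ ≤ 1/20 := min_le_right _ _
  have hδε : 20*δ < ε := by
    have h := min_le_left (ε/40) (1/20)
    have : δ ≤ ε/40 := h
    linarith
  set w : ℕ → ℝ := fun i => (if Fib i ∈ S then (1:ℝ) else 0) - q with hwdef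
  have hWsum : ∀ n : ℕ, ∑ i ∈ Finset.Icc 1 n, w i
      = (((Finset.Icc 1 n).filter (fun i => Fib i ∈ S)).card : ℝ) - q * n := by
    intro n
    rw [hwdef, Finset.sum_sub_distrib, Finset.sum_boole, Finset.sum_const, Nat.card_Icc,
      nsmul_eq_mul, show n + 1 - 1 = n from by omega]
    ring
  have hW0 : Filter.Tendsto (fun n : ℕ => (∑ i ∈ Finset.Icc 1 n, w i)/(n:ℝ))
      Filter.atTop (nhds 0) := by
    have h1 : Filter.Tendsto (fun n : ℕ =>
        (((Finset.Icc 1 n).filter (fun i => Fib i ∈ S)).card : ℝ)/n - q)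
        Filter.atTop (nhds (q - q)) := hq.sub_const q
    rw [sub_self] at h1
    apply h1.congr'
    filter_upwards [Filter.eventually_ge_atTop 1] with n hn
    have hnne : (n:ℝ) ≠ 0 := by
      have : (0:ℝ) < n := by exact_mod_cast hn
      linarith
    rw [hWsum n]
    field_simp
  have hWsmall : ∀ᶠ n : ℕ in Filter.atTop,
      3*|∑ i ∈ Finset.Icc 1 n, w i| + 20 ≤ (δ/2)*n := by
    have habs : Filter.Tendsto (fun n : ℕ => |(∑ i ∈ Finset.Icc 1 n, w i)/(n:ℝ)|)
        Filter.atTop (nhds 0) := by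
      have := hW0.abs
      rwa [abs_zero] at this
    have h1 : ∀ᶠ n : ℕ in Filter.atTop, |(∑ i ∈ Finset.Icc 1 n, w i)/(n:ℝ)| < δ/12 :=
      habs.eventually_lt_const (by positivity)
    filter_upwards [h1, Filter.eventually_ge_atTop 1,
      Filter.eventually_ge_atTop (Nat.ceil ((80:ℝ)/δ))] with n hn1 hn2 hn3
    have hnR : (1:ℝ) ≤ (n:ℝ) := by exact_mod_cast hn2
    have hnpos : (0:ℝ) < (n:ℝ) := by linarith
    have h80 : (80:ℝ)/δ ≤ n := by
      have := Nat.ceil_le.mp hn3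
      exact this
    have h20 : 20 ≤ (δ/4)*n := by
      rw [div_le_iff₀ hδpos] at h80
      nlinarith
    have hWb : |∑ i ∈ Finset.Icc 1 n, w i| ≤ (δ/12)*n := by
      have := hn1
      rw [abs_div, abs_of_pos hnpos, div_lt_iff₀ hnpos] at this
      linarith
    nlinarith [hWb, h20, hδpos]
  have hbadten : Filter.Tendsto (fun n : ℕ =>
      (((VB 1 n).filter (fun A : Finset ℕ =>
        ¬ (|((A.filter (fun i => Fib i ∈ S)).card : ℝ)/(A.card : ℝ) - q| < ε))).card : ℝ)
        / (Nat.fib (n+2) : ℝ)) Filter.atTop (nhds 0) := by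
    apply squeeze_zero' (g := fun n : ℕ => (80/δ^2)/(n:ℝ))
    · filter_upwards with n
      exact div_nonneg (Nat.cast_nonneg _) (Nat.cast_nonneg _)
    · filter_upwards [hWsmall, Filter.eventually_ge_atTop 1] with n hsm hn1
      have hfibpos : (0:ℝ) < (Nat.fib (n+2) : ℝ) := by
        have := Nat.fib_pos.mpr (show 0 < n + 2 by omega)
        exact_mod_cast this
      rw [div_le_iff₀ hfibpos]
      calc (((VB 1 n).filter (fun A : Finset ℕ =>
          ¬ (|((A.filter (fun i => Fib i ∈ S)).card : ℝ)/(A.card : ℝ) - q| < ε))).card : ℝ)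
          ≤ 80/(δ^2*n) * (Nat.fib (n+2) : ℝ) :=
            key_bound n hn1 S q δ ε hq0 hq1 hδpos hδ20 hδε hsm
        _ = 80/δ^2/(n:ℝ) * (Nat.fib (n+2) : ℝ) := by rw [div_div]
    · exact tendsto_const_div_atTop_nhds_zero_nat (80/δ^2)
  have hkey : ∀ n : ℕ, (((Finset.range (Fib (n+1))).filter (fun m =>
      |((((ZD m).filter (fun i => Fib i ∈ S)).card : ℝ) / ((ZD m).card : ℝ)) - q| < ε)).card : ℝ)
      / (Fib (n+1) : ℝ)
      = 1 - (((VB 1 n).filter (fun A : Finset ℕ =>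
          ¬ (|((A.filter (fun i => Fib i ∈ S)).card : ℝ)/(A.card : ℝ) - q| < ε))).card : ℝ)
          / (Nat.fib (n+2) : ℝ) := by
    intro n
    have hZDeq := ZD_card_eq ZD hZD n (fun A : Finset ℕ =>
      |((A.filter (fun i => Fib i ∈ S)).card : ℝ)/(A.card : ℝ) - q| < ε)
    have hNV := card_VB1 n
    have hfibpos : (0:ℝ) < (Nat.fib (n+2) : ℝ) := by
      have := Nat.fib_pos.mpr (show 0 < n + 2 by omega)
      exact_mod_cast this
    have hcastF : (Fib (n+1) : ℝ) = (Nat.fib (n+2) : ℝ) := by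
      norm_num [Fib]
    have hsplitR : ((((VB 1 n).filter (fun A : Finset ℕ =>
        |((A.filter (fun i => Fib i ∈ S)).card : ℝ)/(A.card : ℝ) - q| < ε)).card : ℝ)
        + (((VB 1 n).filter (fun A : Finset ℕ =>
        ¬ (|((A.filter (fun i => Fib i ∈ S)).card : ℝ)/(A.card : ℝ) - q| < ε))).card : ℝ))
        = (Nat.fib (n+2) : ℝ) := by
      rw [← hNV]
      exact_mod_cast card_split (VB 1 n) _
    rw [hZDeq, hcastF, eq_sub_iff_add_eq, ← add_div,
      div_eq_one_iff_eq (ne_of_gt hfibpos)]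
    exact hsplitR
  have hfinal := (tendsto_const_nhds (x := (1:ℝ)) (f := Filter.atTop (α := ℕ))).sub hbadten
  rw [sub_zero] at hfinal
  exact hfinal.congr (fun n => (hkey n).symm)
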